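/- (A Sig-Gröbner basis maps to a Gröbner basis under φ.) Suppose G is a Sig-Gröbner basis, i.e. every nonzero f ∈ P^m Sig-reduces to zero with respect to G. Then φ(G) = { φ(g) : g ∈ G } is a Gröbner basis of the ideal I = ⟨f₁,…,f_m⟩ of P: for every nonzero polynomial p ∈ I there exists g ∈ G with LT(φ(g)) ∣ LT(p). -/
import Mathlib


open MvPolynomial

/-- A term (power product) identified with its exponent vector in `ℕⁿ`;
the product of terms corresponds tord addition of exponent vectors. -/
abbrev Term (n : ℕ) := Fin n →₀ ℕ

/-- A module term `t·eᵢ` identified with the pair `(t, i)`. -/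
abbrev MTerm (n m : ℕ) := (Fin n →₀ ℕ) × Fin m

/-- A monomial order on terms: a linear order with `1 ≤ t` for every term `t`,
compatible with term multiplication (= addition of exponent vectors). -/
structure TermOrder (n : ℕ) where
  le : Term n → Term n → Prop
  linear : IsLinearOrder (Term n) le
  bot : ∀ t : Term n, le 0 t
  add_le_add : ∀ u v w : Term n, le u v → le (w + u) (w + v)

/-- A compatible order extension `⪯` of a monomial order tord module terms:
a linear order whose strict part is well-founded, satisfying
(i) `u ≤ v → u·eᵢ ⪯ v·eᵢ` and (ii) `t·eᵢ ⪯ t′·eⱼ → (u·t)·eᵢ ⪯ (u·t′)·eⱼ`. -/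
structure ModOrder (n m : ℕ) (tord : TermOrder n) where
  le : MTerm n m → MTerm n m → Prop
  linear : IsLinearOrder (MTerm n m) le
  wf : WellFounded (fun a b : MTerm n m => le a b ∧ a ≠ b)
  compat : ∀ u v : Term n, tord.le u v → ∀ i : Fin m, le (u, i) (v, i)
  stable : ∀ (t t' : Term n) (i j : Fin m) (u : Term n),
      le (t, i) (t', j) → le (u + t, i) (u + t', j)

variable {F : Type*} [Field F] {n m : ℕ}

/-- `IsLT tord f t` : `t` is the leading term of the polynomial `f` w.r.t. `tord`. -/
def IsLT (tord : TermOrder n) (f : MvPolynomial (Fin n) F) (t : Term n) : Prop :=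
  t ∈ f.support ∧ ∀ u ∈ f.support, tord.le u t

/-- The module homomorphism `φ : P^m → P`, `(p₁,…,p_m) ↦ Σᵢ pᵢ·fᵢ`. -/
noncomputable def phi (fs : Fin m → MvPolynomial (Fin n) F)
    (f : Fin m → MvPolynomial (Fin n) F) : MvPolynomial (Fin n) F :=
  ∑ i, f i * fs i

/-- The set of module terms occurring in a module element with nonzero coefficient. -/
def msupport (f : Fin m → MvPolynomial (Fin n) F) : Set (MTerm n m) :=
  {σ | MvPolynomial.coeff σ.1 (f σ.2) ≠ 0}

/-- `IsSig mo f σ` : `σ` is the signature of `f`, i.e. the `⪯`-largest module term of `f`. -/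
def IsSig {tord : TermOrder n} (mo : ModOrder n m tord)
    (f : Fin m → MvPolynomial (Fin n) F) (σ : MTerm n m) : Prop :=
  σ ∈ msupport f ∧ ∀ τ ∈ msupport f, mo.le τ σ

/-- Multiplication of a module element by a term `u`. -/
noncomputable def tmul (u : Term n) (f : Fin m → MvPolynomial (Fin n) F) :
    Fin m → MvPolynomial (Fin n) F :=
  fun i => MvPolynomial.monomial u (1 : F) * f i

/-- The strict part `≺` of `⪯`. -/
def mlt {tord : TermOrder n} (mo : ModOrder n m tord) (a b : MTerm n m) : Prop :=
  mo.le a b ∧ a ≠ b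

/-- `σ ≺ s` where `s` is a module term or the formal symbol `∞ = ⊤`
(with `r ≺ ∞` for every module term `r`). -/
def ltE {tord : TermOrder n} (mo : ModOrder n m tord) (σ : MTerm n m)
    (s : WithTop (MTerm n m)) : Prop :=
  ∀ τ : MTerm n m, s = ↑τ → mlt mo σ τ

/-- `σ ⪯ s` where `s` is a module term or the formal symbol `∞ = ⊤`. -/
def leE {tord : TermOrder n} (mo : ModOrder n m tord) (σ : MTerm n m)
    (s : WithTop (MTerm n m)) : Prop :=
  ∀ τ : MTerm n m, s = ↑τ → mo.le σ τ

/-- A term `t` is Sig-reducible w.r.t. `G` up tord `s` if there are `g ∈ G` and a term `u`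
with `LT(φ(u·g)) = t` and `sig(u·g) ≺ s`. -/
def SigRedTerm (tord : TermOrder n) (mo : ModOrder n m tord)
    (fs : Fin m → MvPolynomial (Fin n) F)
    (G : Finset (Fin m → MvPolynomial (Fin n) F))
    (s : WithTop (MTerm n m)) (t : Term n) : Prop :=
  ∃ g ∈ G, ∃ (u : Term n) (σ : MTerm n m),
    IsLT tord (phi fs (tmul u g)) t ∧ IsSig mo (tmul u g) σ ∧ ltE mo σ s

/-- `h` is Sig-tail-irreducible w.r.t. `G` up tord `s` : no term of `Tail(φ(h))`
is Sig-reducible w.r.t. `G` up tord `s`. -/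
def SigTailIrred (tord : TermOrder n) (mo : ModOrder n m tord)
    (fs : Fin m → MvPolynomial (Fin n) F)
    (G : Finset (Fin m → MvPolynomial (Fin n) F))
    (h : Fin m → MvPolynomial (Fin n) F) (s : WithTop (MTerm n m)) : Prop :=
  ∀ lt : Term n, IsLT tord (phi fs h) lt →
    ∀ t ∈ (phi fs h).support, t ≠ lt → ¬ SigRedTerm tord mo fs G s t

/-- A Sig-reduction step on `f` w.r.t. `G` at the term `t ∈ T(φ(f))`, producing `f'`. -/
def SigRedStepAt (tord : TermOrder n) (mo : ModOrder n m tord)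
    (fs : Fin m → MvPolynomial (Fin n) F)
    (G : Finset (Fin m → MvPolynomial (Fin n) F))
    (t : Term n) (f f' : Fin m → MvPolynomial (Fin n) F) : Prop :=
  ∃ g ∈ G, ∃ (u lg : Term n) (σf σug : MTerm n m),
    t ∈ (phi fs f).support ∧ IsLT tord (phi fs g) lg ∧ t = u + lg ∧
    IsSig mo f σf ∧ IsSig mo (tmul u g) σug ∧ mo.le σug σf ∧
    f' = f - (MvPolynomial.coeff t (phi fs f) / MvPolynomial.coeff lg (phi fs g)) • tmul u g

/-- A regular Sig-reduction step at `t` : additionally `sig(u·g) ≺ sig(f)`. -/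
def RegSigRedStepAt (tord : TermOrder n) (mo : ModOrder n m tord)
    (fs : Fin m → MvPolynomial (Fin n) F)
    (G : Finset (Fin m → MvPolynomial (Fin n) F))
    (t : Term n) (f f' : Fin m → MvPolynomial (Fin n) F) : Prop :=
  ∃ g ∈ G, ∃ (u lg : Term n) (σf σug : MTerm n m),
    t ∈ (phi fs f).support ∧ IsLT tord (phi fs g) lg ∧ t = u + lg ∧
    IsSig mo f σf ∧ IsSig mo (tmul u g) σug ∧ mlt mo σug σf ∧
    f' = f - (MvPolynomial.coeff t (phi fs f) / MvPolynomial.coeff lg (phi fs g)) • tmul u g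

/-- A Sig-reduction step on `f` w.r.t. `G`. -/
def SigRedStep (tord : TermOrder n) (mo : ModOrder n m tord)
    (fs : Fin m → MvPolynomial (Fin n) F)
    (G : Finset (Fin m → MvPolynomial (Fin n) F))
    (f f' : Fin m → MvPolynomial (Fin n) F) : Prop :=
  ∃ t : Term n, SigRedStepAt tord mo fs G t f f'

/-- A regular Sig-reduction step on `f` w.r.t. `G`. -/
def RegSigRedStep (tord : TermOrder n) (mo : ModOrder n m tord)
    (fs : Fin m → MvPolynomial (Fin n) F)
    (G : Finset (Fin m → MvPolynomial (Fin n) F))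
    (f f' : Fin m → MvPolynomial (Fin n) F) : Prop :=
  ∃ t : Term n, RegSigRedStepAt tord mo fs G t f f'

/-- `f` Sig-reduces tord zero w.r.t. `G` : `f →_{G,∗} h` for some syzygy `h`. -/
def SigReducesToZero (tord : TermOrder n) (mo : ModOrder n m tord)
    (fs : Fin m → MvPolynomial (Fin n) F)
    (G : Finset (Fin m → MvPolynomial (Fin n) F))
    (f : Fin m → MvPolynomial (Fin n) F) : Prop :=
  ∃ h, Relation.ReflTransGen (SigRedStep tord mo fs G) f h ∧ phi fs h = 0

/-- `G` is a Sig-Gröbner basis up tord the module term `s` :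
every nonzero `f` with `sig(f) ≺ s` Sig-reduces tord zero w.r.t. `G`. -/
def SigGBUpTo (tord : TermOrder n) (mo : ModOrder n m tord)
    (fs : Fin m → MvPolynomial (Fin n) F)
    (G : Finset (Fin m → MvPolynomial (Fin n) F)) (s : MTerm n m) : Prop :=
  ∀ f σ, f ≠ 0 → IsSig mo f σ → mlt mo σ s → SigReducesToZero tord mo fs G f

/-- `q` is a regular Sig-normal form of `p` w.r.t. `G`. -/
def RegNF (tord : TermOrder n) (mo : ModOrder n m tord)
    (fs : Fin m → MvPolynomial (Fin n) F)
    (G : Finset (Fin m → MvPolynomial (Fin n) F))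
    (p q : Fin m → MvPolynomial (Fin n) F) : Prop :=
  Relation.ReflTransGen (RegSigRedStep tord mo fs G) p q ∧
    ∀ q', ¬ RegSigRedStep tord mo fs G q q'

/-- `h` is singularly Sig-top-reducible w.r.t. `G` : a singular Sig-top-reduction step
applies tord `h`. -/
def SingTopReducible (tord : TermOrder n) (mo : ModOrder n m tord)
    (fs : Fin m → MvPolynomial (Fin n) F)
    (G : Finset (Fin m → MvPolynomial (Fin n) F))
    (h : Fin m → MvPolynomial (Fin n) F) : Prop :=
  ∃ t : Term n, IsLT tord (phi fs h) t ∧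
    ∃ g ∈ G, ∃ (u lg : Term n) (σh σug : MTerm n m),
      IsLT tord (phi fs g) lg ∧ t = u + lg ∧
      IsSig mo h σh ∧ IsSig mo (tmul u g) σug ∧ σug = σh

/-- The least common multiple of two terms: the pointwise maximum of exponent vectors. -/
noncomputable def lcmTerm (a b : Term n) : Term n := Finsupp.zipWith max (max_self 0) a b

/-- `p` is the S-pair of `f` and `g` and this S-pair is regular. -/
def IsRegSpair (tord : TermOrder n) (mo : ModOrder n m tord)
    (fs : Fin m → MvPolynomial (Fin n) F)
    (f g p : Fin m → MvPolynomial (Fin n) F) : Prop :=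
  ∃ lf lg : Term n, IsLT tord (phi fs f) lf ∧ IsLT tord (phi fs g) lg ∧
    (∀ σ₁ σ₂ : MTerm n m, IsSig mo (tmul (lcmTerm lf lg - lf) f) σ₁ →
      IsSig mo (tmul (lcmTerm lf lg - lg) g) σ₂ → σ₁ ≠ σ₂) ∧
    p = (MvPolynomial.coeff lf (phi fs f))⁻¹ • tmul (lcmTerm lf lg - lf) f
      - (MvPolynomial.coeff lg (phi fs g))⁻¹ • tmul (lcmTerm lf lg - lg) g

/-- `T_G(f)` : the set of terms of `f` that are reducible w.r.t. the set `G`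
of nonzero polynomials. -/
def TRed (tord : TermOrder n) (G : Finset (MvPolynomial (Fin n) F))
    (f : MvPolynomial (Fin n) F) : Set (Term n) :=
  {t | t ∈ f.support ∧ ∃ g ∈ G, ∃ lg u : Term n, IsLT tord g lg ∧ t = u + lg}

/-- An ordinary reduction step on a polynomial `p` w.r.t. the polynomials `φ(g)`, `g ∈ G`. -/
noncomputable def OrdRedStep (tord : TermOrder n)
    (fs : Fin m → MvPolynomial (Fin n) F)
    (G : Finset (Fin m → MvPolynomial (Fin n) F))
    (p p' : MvPolynomial (Fin n) F) : Prop :=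
  ∃ g ∈ G, ∃ (u lg : Term n),
    IsLT tord (phi fs g) lg ∧ (u + lg) ∈ p.support ∧
    p' = p - (MvPolynomial.coeff (u + lg) p / MvPolynomial.coeff lg (phi fs g)) •
      (MvPolynomial.monomial u (1 : F) * phi fs g)

/-- In a nonempty finset with a linear order relation there is a maximum. -/
lemma exists_max_of_linear {α : Type*} (r : α → α → Prop) (hl : IsLinearOrder α r)
    (s : Finset α) (hs : s.Nonempty) : ∃ a ∈ s, ∀ b ∈ s, r b a := by
  classical
  haveI := hl
  induction s using Finset.induction_on with
  | empty => exact absurd hs (by simp)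
  | @insert x s hx ih =>
    rcases s.eq_empty_or_nonempty with rfl | hne
    · exact ⟨x, Finset.mem_insert_self _ _, by
        intro b hb
        rcases Finset.mem_insert.mp hb with rfl | hb
        · exact refl_of r _
        · simp at hb⟩
    · obtain ⟨a, ha, hmax⟩ := ih hne
      rcases total_of r x a with h | h
      · refine ⟨a, Finset.mem_insert_of_mem ha, ?_⟩
        intro b hb
        rcases Finset.mem_insert.mp hb with rfl | hb
        · exact h
        · exact hmax b hb
      · refine ⟨x, Finset.mem_insert_self _ _, ?_⟩
        intro b hb
        rcases Finset.mem_insert.mp hb with rfl | hb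
        · exact refl_of r _
        · exact trans_of r (hmax b hb) h

lemma phi_sub_smul_tmul {F : Type*} [Field F] {n m : ℕ}
    (fs : Fin m → MvPolynomial (Fin n) F)
    (f g : Fin m → MvPolynomial (Fin n) F) (c : F) (u : Term n) :
    phi fs (f - c • tmul u g)
      = phi fs f - c • (MvPolynomial.monomial u (1 : F) * phi fs g) := by
  unfold phi tmul
  rw [Finset.mul_sum, Finset.smul_sum, ← Finset.sum_sub_distrib]
  refine Finset.sum_congr rfl fun i _ => ?_
  simp only [Pi.sub_apply, Pi.smul_apply, sub_mul, smul_mul_assoc, mul_assoc]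

lemma mem_supp_monomial_mul {F : Type*} [Field F] {n : ℕ}
    {q : MvPolynomial (Fin n) F} {u t : Term n}
    (ht : t ∈ (MvPolynomial.monomial u (1 : F) * q).support) :
    ∃ s ∈ q.support, t = u + s := by
  have h := MvPolynomial.support_mul _ _ ht
  classical
  rw [MvPolynomial.support_monomial, if_neg one_ne_zero] at h
  rw [Finset.mem_add] at h
  obtain ⟨a, ha, b, hb, hab⟩ := h
  rw [Finset.mem_singleton] at ha
  exact ⟨b, hb, by rw [← hab, ha]⟩

/-- A Sig-Gröbner basis maps to a Gröbner basis under `φ`.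
If every nonzero `f ∈ P^m` Sig-reduces to zero w.r.t. `G`, then for every nonzero
polynomial `p` in the ideal `⟨f₁,…,f_m⟩` there is `g ∈ G` with `LT(φ(g)) ∣ LT(p)`. -/
theorem statement9 {F : Type*} [Field F] {n m : ℕ} (hn : 0 < n) (hm : 0 < m)
    (tord : TermOrder n) (mo : ModOrder n m tord)
    (fs : Fin m → MvPolynomial (Fin n) F) (hfs : ∀ i, fs i ≠ 0)
    (G : Finset (Fin m → MvPolynomial (Fin n) F))
    (hG0 : ∀ g ∈ G, g ≠ 0) (hGphi : ∀ g ∈ G, phi fs g ≠ 0)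
    (hGB : ∀ f : Fin m → MvPolynomial (Fin n) F, f ≠ 0 →
      SigReducesToZero tord mo fs G f) :
    ∀ p : MvPolynomial (Fin n) F, p ∈ Ideal.span (Set.range fs) → p ≠ 0 →
      ∃ g ∈ G, ∃ lg lp : Term n, IsLT tord (phi fs g) lg ∧ IsLT tord p lp ∧
        ∃ u : Term n, lp = u + lg := by
  classical
  haveI := tord.linear
  intro p hp hp0
  obtain ⟨c, hc⟩ := (Submodule.mem_span_range_iff_exists_fun _).mp hp
  have hphic : phi fs c = p := by
    rw [phi]; simpa [smul_eq_mul] using hc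
  obtain ⟨lp, hlpmem, hlpmax⟩ :=
    exists_max_of_linear tord.le tord.linear p.support
      (MvPolynomial.support_nonempty.mpr hp0)
  have hIsLTp : IsLT tord p lp := ⟨hlpmem, hlpmax⟩
  have hc0 : c ≠ 0 := by
    intro h
    apply hp0
    rw [← hphic, h, phi]
    simp
  obtain ⟨h, hchain, hh0⟩ := hGB c hc0
  suffices key : ∀ f : Fin m → MvPolynomial (Fin n) F,
      Relation.ReflTransGen (SigRedStep tord mo fs G) f h →
      (∀ t ∈ (phi fs f).support, tord.le t lp) →
      MvPolynomial.coeff lp (phi fs f) ≠ 0 →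
      ∃ g ∈ G, ∃ lg : Term n, IsLT tord (phi fs g) lg ∧ ∃ u : Term n, lp = u + lg by
    obtain ⟨g, hg, lg, hlg, u, hu⟩ := key c hchain
      (by rw [hphic]; exact hlpmax)
      (by rw [hphic]; exact MvPolynomial.mem_support_iff.mp hlpmem)
    exact ⟨g, hg, lg, lp, hlg, hIsLTp, u, hu⟩
  intro f hf
  induction hf using Relation.ReflTransGen.head_induction_on with
  | refl =>
    intro _ hne
    rw [hh0] at hne
    simp at hne
  | head hstep hrest ih =>
    rename_i cur next
    intro hsup hcoeff
    obtain ⟨t, g, hgG, u, lg, σf, σug, htmem, hlg, htulg, _, _, _, hf'⟩ := hstep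
    by_cases hteq : t = lp
    · exact ⟨g, hgG, lg, hlg, u, by rw [← hteq, htulg]⟩
    · have hphif' : phi fs next = phi fs cur -
          (MvPolynomial.coeff t (phi fs cur) / MvPolynomial.coeff lg (phi fs g)) •
            (MvPolynomial.monomial u (1 : F) * phi fs g) := by
        rw [hf', phi_sub_smul_tmul]
      -- every term of the subtracted polynomial is ≤ t
      have hsuble : ∀ s ∈ (MvPolynomial.monomial u (1 : F) * phi fs g).support,
          tord.le s t := by
        intro s hs
        obtain ⟨s', hs', rfl⟩ := mem_supp_monomial_mul hs
        rw [htulg]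
        exact tord.add_le_add _ _ _ (hlg.2 s' hs')
      have htle : tord.le t lp := hsup t htmem
      -- lp is not in the support of the subtracted polynomial
      have hlpnot : MvPolynomial.coeff lp
          (MvPolynomial.monomial u (1 : F) * phi fs g) = 0 := by
        by_contra hne
        have hmem : lp ∈ (MvPolynomial.monomial u (1 : F) * phi fs g).support :=
          MvPolynomial.mem_support_iff.mpr hne
        exact hteq (antisymm_of tord.le htle (hsuble lp hmem))
      refine ih ?_ ?_
      · intro s hs
        rw [hphif'] at hs
        have := MvPolynomial.support_sub _ _ _ hs
        rcases Finset.mem_union.mp this with hmem | hmem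
        · exact hsup s hmem
        · have hmem' := MvPolynomial.support_smul hmem
          exact trans_of tord.le (hsuble s hmem') htle
      · rw [hphif', MvPolynomial.coeff_sub, MvPolynomial.coeff_smul, hlpnot]
        simpa using hcoeff
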